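/- arXiv:2212.08240 — 3 statements merged into one kernel-verified Lean document; each statement's English description precedes it below -/
import Mathlib

section
/- Let σ be a strictly convex polyhedral cone in ℝⁿ (i.e., σ = Cone(x₁,…,x_s) for some x_i ∈ ℝⁿ and {0} is a face of σ). Then there exists a vector v with rational coordinates such that ⟨x, v⟩ ≥ 0 for all x ∈ σ and σ ∩ {x : ⟨x, v⟩ = 0} = {0}. -/
/-- The smallest convex cone containing `X`. -/
def coneHull {E : Type*} [AddCommGroup E] [Module ℝ E] (X : Set E) : Set E :=
  {y | ∃ (s : ℕ) (c : Fin s → ℝ) (x : Fin s → E),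
    (∀ i, 0 ≤ c i) ∧ (∀ i, x i ∈ X) ∧ y = ∑ i, c i • x i}

/-- Standard dot product on `ℝⁿ`. -/
def dotp {n : ℕ} (x v : Fin n → ℝ) : ℝ := ∑ i, x i * v i

section Aux

variable {E : Type*} [AddCommGroup E] [Module ℝ E]

lemma coneHull.zero_mem (X : Set E) : (0 : E) ∈ coneHull X :=
  ⟨0, Fin.elim0, Fin.elim0, fun i => i.elim0, fun i => i.elim0, by simp⟩

lemma coneHull.smul_mem {X : Set E} {y : E} (hy : y ∈ X) {c : ℝ} (hc : 0 ≤ c) :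
    c • y ∈ coneHull X :=
  ⟨1, fun _ => c, fun _ => y, fun _ => hc, fun _ => hy, by simp⟩

lemma coneHull.add_mem {X : Set E} {a b : E} (ha : a ∈ coneHull X) (hb : b ∈ coneHull X) :
    a + b ∈ coneHull X := by
  obtain ⟨s₁, c₁, x₁, hc₁, hx₁, rfl⟩ := ha
  obtain ⟨s₂, c₂, x₂, hc₂, hx₂, rfl⟩ := hb
  refine ⟨s₁ + s₂, Fin.append c₁ c₂, Fin.append x₁ x₂, ?_, ?_, ?_⟩
  · intro i
    induction i using Fin.addCases with
    | left i => simpa [Fin.append_left] using hc₁ i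
    | right i => simpa [Fin.append_right] using hc₂ i
  · intro i
    induction i using Fin.addCases with
    | left i => simpa [Fin.append_left] using hx₁ i
    | right i => simpa [Fin.append_right] using hx₂ i
  · rw [Fin.sum_univ_add]
    simp [Fin.append_left, Fin.append_right]

lemma coneHull.finsetSum_mem {X : Set E} (t : Finset E) (ht : ↑t ⊆ X) (w : E → ℝ)
    (hw : ∀ y ∈ t, 0 ≤ w y) : ∑ y ∈ t, w y • y ∈ coneHull X := by
  classical
  induction t using Finset.induction_on with
  | empty => simpa using coneHull.zero_mem X
  | @insert y t hy ih =>
    rw [Finset.sum_insert hy]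
    exact coneHull.add_mem
      (coneHull.smul_mem (ht (by simp)) (hw _ (by simp)))
      (ih (fun z hz => ht (Finset.subset_insert _ _ hz))
        (fun z hz => hw z (Finset.mem_insert_of_mem hz)))

end Aux

lemma dotp_zero_left {n : ℕ} (v : Fin n → ℝ) : dotp 0 v = 0 := by simp [dotp]

lemma dotp_smul_left {n : ℕ} (c : ℝ) (y v : Fin n → ℝ) :
    dotp (c • y) v = c * dotp y v := by
  simp [dotp, Finset.mul_sum, mul_assoc]

lemma dotp_sum_left {n m : ℕ} (z : Fin m → (Fin n → ℝ)) (v : Fin n → ℝ) :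
    dotp (∑ i, z i) v = ∑ i, dotp (z i) v := by
  simp [dotp, Finset.sum_mul]
  exact Finset.sum_comm

lemma exists_pos_functional
    {n s : ℕ} (x : Fin s → (Fin n → ℝ))
    (h0 : (0 : Fin n → ℝ) ∉ convexHull ℝ (x '' {i | x i ≠ 0})) :
    ∃ v : Fin n → ℝ, ∀ i, x i ≠ 0 → 0 < dotp (x i) v := by
  classical
  set K := convexHull ℝ (x '' {i | x i ≠ 0}) with hK
  have hfin : (x '' {i | x i ≠ 0}).Finite :=
    (Set.finite_range x).subset (Set.image_subset_range _ _)
  have hcpt : IsCompact K := hfin.isCompact_convexHull (𝕜 := ℝ)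
  obtain ⟨f, u, hfu, hu⟩ := geometric_hahn_banach_closed_point (convex_convexHull ℝ _)
    hcpt.isClosed h0
  have hu0 : u < 0 := by simpa using hu
  refine ⟨fun j => -f (Pi.single j 1), ?_⟩
  intro i hi
  have hrep : ∀ y : Fin n → ℝ, dotp y (fun j => -f (Pi.single j 1)) = -f y := by
    intro y
    have hy : y = ∑ j, y j • (Pi.single j 1 : Fin n → ℝ) := by
      funext k
      simp [Finset.sum_apply, Pi.single_apply]
    have : f y = ∑ j, y j * f (Pi.single j 1) := by
      conv_lhs => rw [hy]
      rw [map_sum]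
      simp only [map_smul, smul_eq_mul]
    calc dotp y (fun j => -f (Pi.single j 1)) = ∑ j, y j * -(f (Pi.single j 1)) := rfl
    _ = -∑ j, y j * f (Pi.single j 1) := by rw [← Finset.sum_neg_distrib]; congr 1; ext j; ring
    _ = -f y := by rw [← this]
  rw [hrep]
  have hmem : x i ∈ K := subset_convexHull ℝ _ ⟨i, hi, rfl⟩
  have := hfu _ hmem
  linarith

/-- Rational approximation of a strictly positive functional. -/
lemma exists_rat_pos_functional
    {n s : ℕ} (x : Fin s → (Fin n → ℝ)) (i₀ : Fin s) (hi₀ : x i₀ ≠ 0)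
    (v : Fin n → ℝ) (hv : ∀ i, x i ≠ 0 → 0 < dotp (x i) v) :
    ∃ q : Fin n → ℚ, ∀ i, x i ≠ 0 → 0 < dotp (x i) (fun j => (q j : ℝ)) := by
  classical
  set I : Finset (Fin s) := Finset.univ.filter (fun i => x i ≠ 0) with hI
  have hne : I.Nonempty := ⟨i₀, by simp [hI, hi₀]⟩
  set ε : ℝ := I.inf' hne (fun i => dotp (x i) v) with hε
  have hεpos : 0 < ε := by
    rw [hε]
    apply Finset.lt_inf'_iff hne (f := fun i => dotp (x i) v) (a := (0:ℝ)) |>.2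
    intro i hi
    exact hv i (by simpa [hI] using hi)
  set M : ℝ := I.sup' hne (fun i => ∑ j, |x i j|) with hM
  have hM0 : 0 ≤ M := by
    obtain ⟨i, hi⟩ := hne
    exact le_trans (Finset.sum_nonneg fun j _ => abs_nonneg _) (Finset.le_sup' (fun i => ∑ j, |x i j|) hi)
  set δ : ℝ := ε / (M + 1) with hδ
  have hδpos : 0 < δ := div_pos hεpos (by linarith)
  have hq : ∀ j : Fin n, ∃ q : ℚ, |v j - q| < δ := fun j => exists_rat_near (v j) hδpos
  choose q hq using hq
  refine ⟨q, fun i hi => ?_⟩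
  have hiI : i ∈ I := by simp [hI, hi]
  have hdiff : dotp (x i) v - dotp (x i) (fun j => (q j : ℝ)) = ∑ j, x i j * (v j - q j) := by
    simp [dotp, mul_sub, Finset.sum_sub_distrib]
  have habs : |∑ j, x i j * (v j - q j)| ≤ (∑ j, |x i j|) * δ := by
    calc |∑ j, x i j * (v j - q j)| ≤ ∑ j, |x i j * (v j - q j)| :=
          Finset.abs_sum_le_sum_abs _ _
    _ ≤ ∑ j, |x i j| * δ := by
          refine Finset.sum_le_sum fun j _ => ?_
          rw [abs_mul]
          exact mul_le_mul_of_nonneg_left (hq j).le (abs_nonneg _)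
    _ = (∑ j, |x i j|) * δ := by rw [Finset.sum_mul]
  have hsumM : (∑ j, |x i j|) ≤ M := Finset.le_sup' (fun i => ∑ j, |x i j|) hiI
  have hMδ : M * δ < ε := by
    rw [hδ, ← mul_div_assoc, div_lt_iff₀ (by linarith : (0:ℝ) < M + 1)]
    nlinarith
  have hεle : ε ≤ dotp (x i) v := Finset.inf'_le _ hiI
  have h1 : |∑ j, x i j * (v j - q j)| < ε := by
    calc |∑ j, x i j * (v j - q j)| ≤ (∑ j, |x i j|) * δ := habs
    _ ≤ M * δ := mul_le_mul_of_nonneg_right hsumM hδpos.le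
    _ < ε := hMδ
  have := abs_lt.1 h1
  rw [← hdiff] at *
  linarith [this.2]

/-- A strictly convex polyhedral cone `σ ⊆ ℝⁿ` admits a rational linear
functional `v` which is nonnegative on `σ` and whose kernel meets `σ` only
at the origin. -/
theorem exists_rational_separating_functional
    (n s : ℕ) (x : Fin s → (Fin n → ℝ)) (σ : Set (Fin n → ℝ))
    (hσ : σ = coneHull (Set.range x))
    (hstrict : σ ∩ (-σ) = {0}) :
    ∃ v : Fin n → ℚ,
      (∀ y ∈ σ, 0 ≤ dotp y (fun i => (v i : ℝ))) ∧
      σ ∩ {y | dotp y (fun i => (v i : ℝ)) = 0} = {0} := by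
  classical
  subst hσ
  by_cases hall : ∀ i, x i = 0
  · refine ⟨0, ?_, ?_⟩
    · intro y _
      simp [dotp]
    · ext y
      simp only [Set.mem_inter_iff, Set.mem_setOf_eq, Set.mem_singleton_iff]
      constructor
      · rintro ⟨⟨s', c, z, hc, hz, rfl⟩, -⟩
        have hz0 : ∀ i, z i = 0 := by
          intro i
          obtain ⟨j, hj⟩ := hz i
          rw [← hj, hall j]
        simp [hz0]
      · rintro rfl
        exact ⟨coneHull.zero_mem _, by simp [dotp]⟩
  · push_neg at hall
    obtain ⟨i₀, hi₀⟩ := hall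
    -- `0` is not in the convex hull of the nonzero generators
    have h0 : (0 : Fin n → ℝ) ∉ convexHull ℝ (x '' {i | x i ≠ 0}) := by
      intro hmem
      have hfin : (x '' {i | x i ≠ 0}).Finite :=
        (Set.finite_range x).subset (Set.image_subset_range _ _)
      rw [← hfin.coe_toFinset, Finset.convexHull_eq] at hmem
      obtain ⟨w, hw0, hw1, hcm⟩ := hmem
      rw [Finset.centerMass_eq_of_sum_1 _ _ hw1] at hcm
      simp only [id] at hcm
      have hex : ∃ y ∈ hfin.toFinset, 0 < w y := by
        by_contra h
        push_neg at h
        have : ∑ y ∈ hfin.toFinset, w y = 0 :=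
          Finset.sum_eq_zero fun y hy => le_antisymm (h y hy) (hw0 y hy)
        rw [hw1] at this
        exact one_ne_zero this
      obtain ⟨y₀, hy₀t, hy₀pos⟩ := hex
      have hy₀S : y₀ ∈ x '' {i | x i ≠ 0} := by rwa [← hfin.coe_toFinset]
      have hy₀ne : y₀ ≠ 0 := by
        obtain ⟨i, hi, rfl⟩ := hy₀S
        exact hi
      have hy₀range : y₀ ∈ Set.range x := by
        obtain ⟨i, _, rfl⟩ := hy₀S
        exact ⟨i, rfl⟩
      have hsplit : w y₀ • y₀ + ∑ y ∈ hfin.toFinset.erase y₀, w y • y = 0 := by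
        have := hcm
        rw [← Finset.add_sum_erase _ (fun y => w y • y) hy₀t] at this
        exact this
      have hmem1 : w y₀ • y₀ ∈ coneHull (Set.range x) :=
        coneHull.smul_mem hy₀range hy₀pos.le
      have hmem2 : w y₀ • y₀ ∈ -coneHull (Set.range x) := by
        rw [Set.mem_neg]
        have : -(w y₀ • y₀) = ∑ y ∈ hfin.toFinset.erase y₀, w y • y :=
          (eq_neg_of_add_eq_zero_right hsplit).symm
        rw [this]
        refine coneHull.finsetSum_mem _ ?_ _ ?_
        · intro z hz
          have hzt : z ∈ hfin.toFinset := Finset.mem_of_mem_erase (by exact_mod_cast hz)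
          have : z ∈ x '' {i | x i ≠ 0} := by rwa [← hfin.coe_toFinset]
          obtain ⟨i, _, rfl⟩ := this
          exact ⟨i, rfl⟩
        · intro z hz
          exact hw0 z (Finset.mem_of_mem_erase hz)
      have : w y₀ • y₀ ∈ ({0} : Set (Fin n → ℝ)) := by
        rw [← hstrict]
        exact ⟨hmem1, hmem2⟩
      rw [Set.mem_singleton_iff] at this
      exact smul_ne_zero hy₀pos.ne' hy₀ne this
    obtain ⟨v, hv⟩ := exists_pos_functional x h0
    obtain ⟨q, hq⟩ := exists_rat_pos_functional x i₀ hi₀ v hv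
    have hnonneg : ∀ i, 0 ≤ dotp (x i) (fun j => (q j : ℝ)) := by
      intro i
      by_cases h : x i = 0
      · rw [h, dotp_zero_left]
      · exact (hq i h).le
    refine ⟨q, ?_, ?_⟩
    · rintro y ⟨s', c, z, hc, hz, rfl⟩
      rw [dotp_sum_left]
      refine Finset.sum_nonneg fun i _ => ?_
      rw [dotp_smul_left]
      obtain ⟨j, hj⟩ := hz i
      exact mul_nonneg (hc i) (hj ▸ hnonneg j)
    · ext y
      simp only [Set.mem_inter_iff, Set.mem_setOf_eq, Set.mem_singleton_iff]
      constructor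
      · rintro ⟨⟨s', c, z, hc, hz, rfl⟩, hy0⟩
        rw [dotp_sum_left] at hy0
        simp only [dotp_smul_left] at hy0
        have hnn : ∀ i ∈ Finset.univ, 0 ≤ c i * dotp (z i) (fun j => (q j : ℝ)) := by
          intro i _
          obtain ⟨j, hj⟩ := hz i
          exact mul_nonneg (hc i) (hj ▸ hnonneg j)
        have hterm := (Finset.sum_eq_zero_iff_of_nonneg hnn).1 hy0
        have hzero : ∀ i, c i • z i = 0 := by
          intro i
          obtain ⟨j, hj⟩ := hz i
          by_cases h : x j = 0
          · rw [← hj, h, smul_zero]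
          · have hpos := hq j h
            have := hterm i (Finset.mem_univ i)
            rw [← hj] at this
            have hc0 : c i = 0 := by
              rcases mul_eq_zero.1 this with h' | h'
              · exact h'
              · exact absurd h' hpos.ne'
            rw [hc0, zero_smul]
        simp [hzero]
      · rintro rfl
        exact ⟨coneHull.zero_mem _, by simp [dotp]⟩
end

section
/- Let L and M be two lines in ℝ² not passing through the origin, with squared-distance functions f_L(λ) = c²(1+λ²)/(a+bλ)² and f_M(λ) = c'²(1+λ²)/(a'+b'λ)². If f_L and f_M agree as rational functions of λ (equivalently, all derivatives agree at a single point of their common domain), then M = L or M = −L (i.e., (a',b',c') is a scalar multiple of (a,b,c) or of (−a,−b,c)). -/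
/-- If the squared-distance functions of two lines `L : ax+by=c` and
`M : a'x+b'y=c'`, neither through the origin, agree as rational functions
(equivalently, the polynomial system below holds), then `M = L` or `M = −L`:
`(a',b',c')` is a scalar multiple of `(a,b,c)` or of `(−a,−b,c)`. -/
theorem line_determined_by_distance_function
    (a b c a' b' c' : ℝ)
    (hab : (a, b) ≠ (0, 0)) (hab' : (a', b') ≠ (0, 0))
    (hc : c ≠ 0) (hc' : c' ≠ 0)
    (h1 : c ^ 2 * a' ^ 2 = c' ^ 2 * a ^ 2)
    (h2 : c ^ 2 * (a' * b') = c' ^ 2 * (a * b))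
    (h3 : c ^ 2 * b' ^ 2 = c' ^ 2 * b ^ 2) :
    ∃ μ : ℝ, (a', b', c') = (μ * a, μ * b, μ * c) ∨
      (a', b', c') = (μ * (-a), μ * (-b), μ * c) := by
  refine ⟨c' / c, ?_⟩
  have ha : (c * a' - c' * a) * (c * a' + c' * a) = 0 := by nlinarith [h1]
  have hb : (c * b' - c' * b) * (c * b' + c' * b) = 0 := by nlinarith [h3]
  have hcμ : c' = c' / c * c := by field_simp
  have hc2 : (c':ℝ)^2 ≠ 0 := pow_ne_zero 2 hc'
  rcases mul_eq_zero.1 ha with ha1 | ha1 <;> rcases mul_eq_zero.1 hb with hb1 | hb1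
  · -- c a' = c' a, c b' = c' b
    left
    refine Prod.ext ?_ (Prod.ext ?_ ?_) <;> simp only []
    · field_simp; linarith
    · field_simp; linarith
    · exact hcμ
  · -- mixed: forces a*b = 0
    have e1 : c * a' = c' * a := by linarith
    have e2 : c * b' = -(c' * b) := by linarith
    have h4 : (c * a') * (c * b') = (c' * a) * (-(c' * b)) := by rw [e1, e2]
    have h5 : c' ^ 2 * (a * b) = 0 := by nlinarith [h4, h2]
    rcases mul_eq_zero.1 ((mul_eq_zero.1 h5).resolve_left hc2) with h0 | h0
    · right
      have ha0 : a' = 0 := by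
        have : c * a' = 0 := by rw [e1, h0]; ring
        exact (mul_eq_zero.1 this).resolve_left hc
      refine Prod.ext ?_ (Prod.ext ?_ ?_) <;> simp only [ha0, h0]
      · ring
      · field_simp; linarith
      · exact hcμ
    · left
      have hb0 : b' = 0 := by
        have : c * b' = 0 := by rw [e2, h0]; ring
        exact (mul_eq_zero.1 this).resolve_left hc
      refine Prod.ext ?_ (Prod.ext ?_ ?_) <;> simp only [hb0, h0]
      · field_simp; linarith
      · ring
      · exact hcμ
  · -- mixed: forces a*b = 0
    have e1 : c * a' = -(c' * a) := by linarith
    have e2 : c * b' = c' * b := by linarith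
    have h4 : (c * a') * (c * b') = (-(c' * a)) * (c' * b) := by rw [e1, e2]
    have h5 : c' ^ 2 * (a * b) = 0 := by nlinarith [h4, h2]
    rcases mul_eq_zero.1 ((mul_eq_zero.1 h5).resolve_left hc2) with h0 | h0
    · left
      have ha0 : a' = 0 := by
        have : c * a' = 0 := by rw [e1, h0]; ring
        exact (mul_eq_zero.1 this).resolve_left hc
      refine Prod.ext ?_ (Prod.ext ?_ ?_) <;> simp only [ha0, h0]
      · ring
      · field_simp; linarith
      · exact hcμ
    · right
      have hb0 : b' = 0 := by
        have : c * b' = 0 := by rw [e2, h0]; ring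
        exact (mul_eq_zero.1 this).resolve_left hc
      refine Prod.ext ?_ (Prod.ext ?_ ?_) <;> simp only [hb0, h0]
      · field_simp; linarith
      · ring
      · exact hcμ
  · -- c a' = -c' a, c b' = -c' b
    right
    refine Prod.ext ?_ (Prod.ext ?_ ?_) <;> simp only []
    · field_simp; linarith
    · field_simp; linarith
    · exact hcμ
end

section
/- Consider the fan Σ in ℝ⁴ with rays generated by u₁=(−2,−1,0,1), u₂=(2,−1,0,1), u₃=(0,−2,−1,1), u₄=(0,2,−1,1), u₅=(−1,0,−2,1), u₆=(−1,0,2,1), u₇=(0,0,0,−1), and maximal cones spanned by the index sets {1,2,3,7}, {1,2,6,7}, {3,4,2,7}, {3,4,5,7}, {5,6,1,7}, {5,6,4,7}, {1,3,5,7}, {2,4,6,7}. Then the vector (0,0,0,1) is not contained in any cone of Σ; in particular Σ is not complete. -/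
private lemma dot_nonpos_of_coneHull (w : Fin 4 → ℝ) (X : Set (Fin 4 → ℝ))
    (hX : ∀ x ∈ X, dotProduct w x ≤ 0) :
    ∀ y ∈ coneHull X, dotProduct w y ≤ 0 := by
  rintro y ⟨s, c, x, hc, hx, rfl⟩
  have : dotProduct w (∑ i, c i • x i) = ∑ i, c i * dotProduct w (x i) := by
    simp only [dotProduct, Finset.sum_apply, Pi.smul_apply, smul_eq_mul, Finset.mul_sum]
    rw [Finset.sum_comm]
    exact Finset.sum_congr rfl fun i _ => Finset.sum_congr rfl fun j _ => by ring
  rw [this]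
  exact Finset.sum_nonpos fun i _ => mul_nonpos_of_nonneg_of_nonpos (hc i) (hX _ (hx i))

private lemma not_mem_coneHull (w : Fin 4 → ℝ) (X : Set (Fin 4 → ℝ))
    (hX : ∀ x ∈ X, dotProduct w x ≤ 0)
    (hpos : 0 < dotProduct w (![0, 0, 0, 1] : Fin 4 → ℝ)) :
    (![0, 0, 0, 1] : Fin 4 → ℝ) ∉ coneHull X :=
  fun h => absurd (dot_nonpos_of_coneHull w X hX _ h) (not_le.mpr hpos)

/-- For the fan in `ℝ⁴` with rays `u₁,…,u₇` and the eight listed maximal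
cones, the vector `(0,0,0,1)` lies in none of the maximal cones (hence in no
cone of the fan), and in particular the fan is not complete. -/
theorem example_maximal_noncomplete_fan
    (u : Fin 7 → (Fin 4 → ℝ))
    (hu : u = ![![-2, -1, 0, 1], ![2, -1, 0, 1], ![0, -2, -1, 1], ![0, 2, -1, 1],
      ![-1, 0, -2, 1], ![-1, 0, 2, 1], ![0, 0, 0, -1]])
    (cones : Fin 8 → Set (Fin 4 → ℝ))
    (hcones : cones = ![
      coneHull {u 0, u 1, u 2, u 6},
      coneHull {u 0, u 1, u 5, u 6},
      coneHull {u 2, u 3, u 1, u 6},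
      coneHull {u 2, u 3, u 4, u 6},
      coneHull {u 4, u 5, u 0, u 6},
      coneHull {u 4, u 5, u 3, u 6},
      coneHull {u 0, u 2, u 4, u 6},
      coneHull {u 1, u 3, u 5, u 6}]) :
    (∀ a : Fin 8, (![0, 0, 0, 1] : Fin 4 → ℝ) ∉ cones a) ∧
    (⋃ a : Fin 8, cones a) ≠ Set.univ := by
  have check : ∀ (w : Fin 4 → ℝ) (X : Set (Fin 4 → ℝ)),
      (∀ x ∈ X, dotProduct w x ≤ 0) →
      0 < dotProduct w (![0, 0, 0, 1] : Fin 4 → ℝ) →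
      (![0, 0, 0, 1] : Fin 4 → ℝ) ∉ coneHull X := not_mem_coneHull
  have h0 : u 0 = ![-2, -1, 0, 1] := by rw [hu]; rfl
  have h1 : u 1 = ![2, -1, 0, 1] := by rw [hu]; rfl
  have h2 : u 2 = ![0, -2, -1, 1] := by rw [hu]; rfl
  have h3 : u 3 = ![0, 2, -1, 1] := by rw [hu]; rfl
  have h4 : u 4 = ![-1, 0, -2, 1] := by rw [hu]; rfl
  have h5 : u 5 = ![-1, 0, 2, 1] := by rw [hu]; rfl
  have h6 : u 6 = ![0, 0, 0, -1] := by rw [hu]; rfl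
  have key : ∀ a : Fin 8, (![0, 0, 0, 1] : Fin 4 → ℝ) ∉ cones a := by
    intro a
    rw [hcones]
    fin_cases a <;>
      simp only [Matrix.cons_val_zero, Matrix.cons_val_one, Matrix.head_cons,
        Matrix.cons_val_succ, Fin.isValue]
    · exact check ![0, 1, 0, 1] _ (by
        rintro x (rfl | rfl | rfl | rfl) <;>
          norm_num [h0, h1, h2, h3, h4, h5, h6, dotProduct, Fin.sum_univ_four, Matrix.cons_val_two, Matrix.cons_val_three])
        (by norm_num [dotProduct, Fin.sum_univ_four, Matrix.cons_val_two, Matrix.cons_val_three])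
    · exact check ![0, 2, -1, 2] _ (by
        rintro x (rfl | rfl | rfl | rfl) <;>
          norm_num [h0, h1, h2, h3, h4, h5, h6, dotProduct, Fin.sum_univ_four, Matrix.cons_val_two, Matrix.cons_val_three])
        (by norm_num [dotProduct, Fin.sum_univ_four, Matrix.cons_val_two, Matrix.cons_val_three])
    · exact check ![-1, 0, 2, 2] _ (by
        rintro x (rfl | rfl | rfl | rfl) <;>
          norm_num [h0, h1, h2, h3, h4, h5, h6, dotProduct, Fin.sum_univ_four, Matrix.cons_val_two, Matrix.cons_val_three])
        (by norm_num [dotProduct, Fin.sum_univ_four, Matrix.cons_val_two, Matrix.cons_val_three])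
    · exact check ![0, 0, 1, 1] _ (by
        rintro x (rfl | rfl | rfl | rfl) <;>
          norm_num [h0, h1, h2, h3, h4, h5, h6, dotProduct, Fin.sum_univ_four, Matrix.cons_val_two, Matrix.cons_val_three])
        (by norm_num [dotProduct, Fin.sum_univ_four, Matrix.cons_val_two, Matrix.cons_val_three])
    · exact check ![1, 0, 0, 1] _ (by
        rintro x (rfl | rfl | rfl | rfl) <;>
          norm_num [h0, h1, h2, h3, h4, h5, h6, dotProduct, Fin.sum_univ_four, Matrix.cons_val_two, Matrix.cons_val_three])
        (by norm_num [dotProduct, Fin.sum_univ_four, Matrix.cons_val_two, Matrix.cons_val_three])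
    · exact check ![2, -1, 0, 2] _ (by
        rintro x (rfl | rfl | rfl | rfl) <;>
          norm_num [h0, h1, h2, h3, h4, h5, h6, dotProduct, Fin.sum_univ_four, Matrix.cons_val_two, Matrix.cons_val_three])
        (by norm_num [dotProduct, Fin.sum_univ_four, Matrix.cons_val_two, Matrix.cons_val_three])
    · exact check ![1, 1, 1, 3] _ (by
        rintro x (rfl | rfl | rfl | rfl) <;>
          norm_num [h0, h1, h2, h3, h4, h5, h6, dotProduct, Fin.sum_univ_four, Matrix.cons_val_two, Matrix.cons_val_three])
        (by norm_num [dotProduct, Fin.sum_univ_four, Matrix.cons_val_two, Matrix.cons_val_three])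
    · exact check ![-1, -1, -1, 1] _ (by
        rintro x (rfl | rfl | rfl | rfl) <;>
          norm_num [h0, h1, h2, h3, h4, h5, h6, dotProduct, Fin.sum_univ_four, Matrix.cons_val_two, Matrix.cons_val_three])
        (by norm_num [dotProduct, Fin.sum_univ_four, Matrix.cons_val_two, Matrix.cons_val_three])
  refine ⟨key, fun h => ?_⟩
  have ht : (![0, 0, 0, 1] : Fin 4 → ℝ) ∈ ⋃ a : Fin 8, cones a := h ▸ Set.mem_univ _
  obtain ⟨_, ⟨a, rfl⟩, ha⟩ := ht
  exact key a ha
end
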